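/- For any graph H on n vertices, the vertex arboricity satisfies a(H) + a(complement of H) ≤ (n+3)/2, where a(H) is the minimum number of classes in a vertex partition such that each class induces a forest. -/

import Mathlib

open SimpleGraph

/-- `H` contains a copy of `G`: an injective map preserving adjacency. -/
def ContainsCopy {α β : Type*} (G : SimpleGraph α) (H : SimpleGraph β) : Prop :=
  ∃ f : α ↪ β, ∀ a b, G.Adj a b → H.Adj (f a) (f b)

/-- `H` is `G`-free. -/
def GFree {α β : Type*} (G : SimpleGraph α) (H : SimpleGraph β) : Prop :=
  ¬ ContainsCopy G H

/-- The `G`-free chromatic number of `H`. -/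
noncomputable def gChrom {α β : Type*} (G : SimpleGraph α) (H : SimpleGraph β) : ℕ :=
  sInf {k | ∃ c : β → Fin k, ∀ i, GFree G (H.induce {v | c v = i})}

/-- `H` is `G`-free `k`-critical. -/
def GFreeCritical {α β : Type*} (G : SimpleGraph α) (H : SimpleGraph β) (k : ℕ) : Prop :=
  gChrom G H = k ∧ ∀ F : H.Subgraph, F ≠ ⊤ → gChrom G F.coe ≤ k - 1

/-- The vertex arboricity of `H`: the least number of classes in a vertex partition
such that each class induces a forest. -/
noncomputable def vertexArboricity {β : Type*} (H : SimpleGraph β) : ℕ :=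
  sInf {k | ∃ c : β → Fin k, ∀ i, (H.induce {v | c v = i}).IsAcyclic}

/-! ### Auxiliary lemmas -/

lemma NG.acyclic_of_emb {V W : Type*} {G : SimpleGraph V} {H : SimpleGraph W}
    (f : G ↪g H) (h : H.IsAcyclic) : G.IsAcyclic := by
  intro v p hp
  exact h (p.map f.toHom) (hp.map f.injective)

lemma NG.lift_walk {V : Type*} {G : SimpleGraph V} {s : Set V} :
    ∀ {x y : V} (p : G.Walk x y) (hx : x ∈ s) (hy : y ∈ s)
      (h : ∀ w ∈ p.support, w ∈ s),
      ∃ q : (G.induce s).Walk ⟨x, hx⟩ ⟨y, hy⟩,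
        q.map (Embedding.induce s).toHom = p := by
  intro x y p
  induction p with
  | nil => intro hx hy _; exact ⟨Walk.nil, rfl⟩
  | @cons u v w a p ih =>
    intro hx hy h
    have hv : v ∈ s := h v (by simp)
    obtain ⟨q, hq⟩ := ih hv hy (fun z hz => h z (by simp [hz]))
    exact ⟨Walk.cons (by exact a) q, by subst hq; rfl⟩

lemma NG.no_cycle_at_low_deg {V : Type*} {G : SimpleGraph V} {v : V}
    (hd : ∀ a b, G.Adj v a → G.Adj v b → a = b) (q : G.Walk v v) : ¬ q.IsCycle := by
  intro hq
  cases q with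
  | nil => exact hq.ne_nil rfl
  | @cons _ a _ h r =>
    obtain ⟨b, hb, r', hr⟩ := Walk.exists_eq_cons_of_ne h.ne r.reverse
    have hmem : s(v, b) ∈ r.reverse.edges := by rw [hr]; simp
    rw [Walk.edges_reverse, List.mem_reverse] at hmem
    have hab : a = b := hd a b h hb
    have := (Walk.isTrail_cons _ _).mp hq.isTrail
    exact this.2 (hab ▸ hmem)

/-- Adding a vertex of degree at most 1 to an acyclic graph keeps it acyclic. -/
lemma NG.acyclic_insert {V : Type*} {G : SimpleGraph V} {v : V}
    (hd : ∀ a b, G.Adj v a → G.Adj v b → a = b)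
    (h : (G.induce {w | w ≠ v}).IsAcyclic) : G.IsAcyclic := by
  classical
  intro u p hp
  by_cases hv : v ∈ p.support
  · exact NG.no_cycle_at_low_deg hd (p.rotate v hv) (hp.rotate hv)
  · have hsup : ∀ w ∈ p.support, w ∈ {w | w ≠ v} := fun w hw => fun e => hv (e ▸ hw)
    obtain ⟨q, hq⟩ := NG.lift_walk p (hsup u p.start_mem_support)
      (hsup u p.start_mem_support) hsup
    refine h q ?_
    exact (Walk.map_isCycle_iff_of_injective (G := G.induce {w | w ≠ v})
      (Embedding.induce (G := G) {w | w ≠ v}).injective).mp (by rwa [hq])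

/-- `G` is `D`-degenerate: every nonempty vertex set has a vertex with at most `D`
neighbours inside the set. -/
def NG.Degen {β : Type*} (G : SimpleGraph β) (D : ℕ) : Prop :=
  ∀ S : Set β, S.Nonempty → ∃ v ∈ S, (S ∩ {w | G.Adj v w}).ncard ≤ D

lemma NG.inter_nbhd_subset {β : Type*} (G : SimpleGraph β) (S : Set β) (v : β) :
    S ∩ {w | G.Adj v w} ⊆ S \ {v} := fun _w hw => ⟨hw.1, fun h => G.irrefl (h ▸ hw.2)⟩

lemma NG.ncard_le_sub_one {β : Type*} [Fintype β] {G : SimpleGraph β} {S : Set β} {v : β}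
    (hv : v ∈ S) : (S ∩ {w | G.Adj v w}).ncard ≤ S.ncard - 1 := by
  calc (S ∩ {w | G.Adj v w}).ncard ≤ (S \ {v}).ncard :=
        Set.ncard_le_ncard (NG.inter_nbhd_subset G S v)
    _ = S.ncard - 1 := Set.ncard_diff_singleton_of_mem hv

lemma NG.ncard_le_n {β : Type*} [Fintype β] (S : Set β) : S.ncard ≤ Fintype.card β := by
  have := Set.ncard_le_ncard (Set.subset_univ S) Set.finite_univ
  rwa [Set.ncard_univ, Nat.card_eq_fintype_card] at this

lemma NG.degen_top {β : Type*} [Fintype β] (G : SimpleGraph β) :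
    NG.Degen G (Fintype.card β - 1) := by
  intro S hS
  obtain ⟨v, hv⟩ := hS
  exact ⟨v, hv, le_trans (NG.ncard_le_sub_one hv) (by have := NG.ncard_le_n (β := β) S; omega)⟩

lemma NG.degen_compl {β : Type*} [Fintype β] (G : SimpleGraph β) :
    ∃ D, D ≤ Fintype.card β - 1 ∧ NG.Degen G D ∧ NG.Degen Gᶜ (Fintype.card β - 1 - D) := by
  set n := Fintype.card β with hn
  set D := sInf {D | NG.Degen G D} with hD
  have hne : {D | NG.Degen G D}.Nonempty := Set.nonempty_of_mem (NG.degen_top G)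
  have hDle : D ≤ n - 1 := Nat.sInf_le (NG.degen_top G)
  have hDmem : NG.Degen G D := Nat.sInf_mem hne
  refine ⟨D, hDle, hDmem, ?_⟩
  rcases Nat.eq_zero_or_pos D with h0 | hpos
  · rw [h0]
    simpa using NG.degen_top Gᶜ
  · have hnot : D - 1 ∉ {D | NG.Degen G D} := Nat.notMem_of_lt_sInf (by omega)
    simp only [Set.mem_setOf_eq, NG.Degen, not_forall] at hnot
    push_neg at hnot
    obtain ⟨S, hSne, hS⟩ := hnot
    have hSdeg : ∀ v ∈ S, D ≤ (S ∩ {w | G.Adj v w}).ncard := by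
      intro v hv
      have := hS v hv
      omega
    have hScard : D + 1 ≤ S.ncard := by
      obtain ⟨v, hv⟩ := hSne
      have h1 := hSdeg v hv
      have h2 := NG.ncard_le_sub_one (G := G) hv
      have h3 : 1 ≤ S.ncard := by
        rw [← Set.ncard_singleton v]
        exact Set.ncard_le_ncard (by simpa using hv)
      omega
    intro T hT
    by_cases hint : (S ∩ T).Nonempty
    · obtain ⟨v, hv, hv'⟩ := hint
      refine ⟨v, hv', ?_⟩
      have hdegG : D ≤ ({w | G.Adj v w} : Set β).ncard :=
        le_trans (hSdeg v hv) (Set.ncard_le_ncard Set.inter_subset_right)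
      have hcompl : {w | Gᶜ.Adj v w} = Set.univ \ ({v} ∪ {w | G.Adj v w}) := by
        ext w
        simp only [Set.mem_setOf_eq, Set.mem_diff, Set.mem_univ, Set.mem_union,
          Set.mem_singleton_iff, compl_adj, true_and]
        constructor
        · rintro ⟨h1, h2⟩; rintro (rfl | h3) <;> [exact h1 rfl; exact h2 h3]
        · intro h; exact ⟨fun e => h (Or.inl e.symm), fun a => h (Or.inr a)⟩
      have hcard : ({w | Gᶜ.Adj v w} : Set β).ncard
          = n - (1 + ({w | G.Adj v w} : Set β).ncard) := by
        rw [hcompl, Set.ncard_diff (Set.subset_univ _), Set.ncard_univ, Nat.card_eq_fintype_card,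
          Set.ncard_union_eq (by simp [Set.disjoint_left]), Set.ncard_singleton]
      have hle : (T ∩ {w | Gᶜ.Adj v w}).ncard ≤ ({w | Gᶜ.Adj v w} : Set β).ncard :=
        Set.ncard_le_ncard Set.inter_subset_right
      omega
    · obtain ⟨v, hv⟩ := hT
      refine ⟨v, hv, ?_⟩
      have hST : S.ncard + T.ncard ≤ n := by
        rw [← Set.ncard_union_eq (Set.disjoint_iff_inter_eq_empty.mpr
          (Set.not_nonempty_iff_eq_empty.mp hint))]
        exact NG.ncard_le_n _
      have h1 := NG.ncard_le_sub_one (G := Gᶜ) hv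
      have h3 : 1 ≤ T.ncard := by
        rw [← Set.ncard_singleton v]
        exact Set.ncard_le_ncard (by simpa using hv)
      omega

universe u

/-- A `D`-degenerate graph has vertex arboricity at most `D/2 + 1`. -/
lemma NG.degen_arb (n : ℕ) : ∀ {β : Type u} [Fintype β] (G : SimpleGraph β) (D : ℕ),
    Fintype.card β ≤ n → NG.Degen G D →
    ∃ c : β → Fin (D / 2 + 1), ∀ i, (G.induce {w | c w = i}).IsAcyclic := by
  induction n with
  | zero =>
    intro β _ G D hcard _
    have hE : IsEmpty β := Fintype.card_eq_zero_iff.mp (le_antisymm hcard (Nat.zero_le _))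
    exact ⟨fun w => (hE.false w).elim, fun i v _ _ => (hE.false v.1).elim⟩
  | succ m ih =>
    intro β _ G D hcard hdeg
    rcases isEmpty_or_nonempty β with hemp | hne
    · exact ⟨fun w => (hemp.false w).elim, fun i v _ _ => (hemp.false v.1).elim⟩
    · obtain ⟨v, -, hvdeg⟩ := hdeg Set.univ ⟨Classical.arbitrary β, trivial⟩
      rw [Set.univ_inter] at hvdeg
      classical
      set s : Set β := {w | w ≠ v} with hs
      have hcards : Fintype.card ↥s ≤ m := by
        have h1 : Fintype.card ↥s = Fintype.card β - 1 := by
          have he : Fintype.card {w // w = v} = 1 := Fintype.card_subtype_eq v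
          have h2 := Fintype.card_subtype_compl (fun w => w = v)
          rw [he] at h2
          convert h2 using 2
          rfl
        have h3 : 1 ≤ Fintype.card β := Fintype.card_pos
        omega
      have hdeg' : NG.Degen (G.induce s) D := by
        intro S' hS'
        obtain ⟨u, hu, hcard'⟩ := hdeg (Subtype.val '' S') (hS'.image _)
        obtain ⟨u', hu', rfl⟩ := hu
        refine ⟨u', hu', ?_⟩
        have himg : Subtype.val '' (S' ∩ {w | (G.induce s).Adj u' w})
            ⊆ (Subtype.val '' S') ∩ {w | G.Adj u'.1 w} := by
          rintro w ⟨x, ⟨hx1, hx2⟩, rfl⟩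
          exact ⟨⟨x, hx1, rfl⟩, hx2⟩
        calc (S' ∩ {w | (G.induce s).Adj u' w}).ncard
            = (Subtype.val '' (S' ∩ {w | (G.induce s).Adj u' w})).ncard :=
              (Set.ncard_image_of_injective _ Subtype.val_injective).symm
          _ ≤ ((Subtype.val '' S') ∩ {w | G.Adj u'.1 w}).ncard :=
              Set.ncard_le_ncard himg
          _ ≤ D := hcard'
      obtain ⟨c', hc'⟩ := ih (G.induce s) D hcards hdeg'
      have hk1 : 0 < D / 2 + 1 := Nat.succ_pos _
      set d : β → Fin (D / 2 + 1) := fun w => if h : w = v then ⟨0, hk1⟩ else c' ⟨w, h⟩ with hd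
      have hNfin : ({w | G.Adj v w} : Set β).Finite := Set.toFinite _
      set N : Finset β := hNfin.toFinset with hN
      have hNcard : N.card ≤ D := by
        rw [← Set.ncard_eq_toFinset_card _ hNfin]; exact hvdeg
      have hsmall : ∃ i : Fin (D / 2 + 1), (N.filter (fun w => d w = i)).card ≤ 1 := by
        by_contra hcon
        push_neg at hcon
        have hsum : N.card = ∑ i : Fin (D / 2 + 1), (N.filter (fun w => d w = i)).card :=
          Finset.card_eq_sum_card_fiberwise (fun w _ => Finset.mem_univ (d w))
        have h2 : 2 * (D / 2 + 1) ≤ ∑ i : Fin (D / 2 + 1), (N.filter (fun w => d w = i)).card := by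
          calc 2 * (D / 2 + 1) = ∑ _i : Fin (D / 2 + 1), 2 := by simp [Finset.sum_const, mul_comm]
            _ ≤ _ := Finset.sum_le_sum (fun i _ => hcon i)
        omega
      obtain ⟨i, hi⟩ := hsmall
      set c : β → Fin (D / 2 + 1) := fun w => if h : w = v then i else c' ⟨w, h⟩ with hc
      have hcv : c v = i := by simp [hc]
      have hcd : ∀ (w) (h : w ≠ v), c w = c' ⟨w, h⟩ := fun w h => by simp [hc, h]
      have hdd : ∀ (w) (h : w ≠ v), d w = c' ⟨w, h⟩ := fun w h => by simp [hd, h]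
      refine ⟨c, fun j => ?_⟩
      by_cases hij : j = i
      · subst hij
        have hvA : v ∈ {w | c w = j} := hcv
        apply NG.acyclic_insert (v := (⟨v, hvA⟩ : {w | c w = j}))
        · rintro ⟨a, ha⟩ ⟨b, hb⟩ hadj1 hadj2
          have hadj1' : G.Adj v a := hadj1
          have hadj2' : G.Adj v b := hadj2
          have hmem : ∀ (x) (hx : G.Adj v x), c x = j → x ∈ N.filter (fun w => d w = j) := by
            intro x hx hcx
            refine Finset.mem_filter.mpr ⟨by rw [hN]; exact hNfin.mem_toFinset.mpr hx, ?_⟩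
            rw [hdd x hx.ne', ← hcd x hx.ne', hcx]
          have := Finset.card_le_one.mp hi a (hmem a hadj1' ha) b (hmem b hadj2' hb)
          exact Subtype.ext this
        · -- remaining class is a subset of old class j
          have hne1 : ∀ x : {w : ↥{w | c w = j} | w ≠ ⟨v, hvA⟩}, x.1.1 ≠ v := by
            rintro ⟨⟨x, hx⟩, hxne⟩ e
            exact hxne (Subtype.ext e)
          have hcl1 : ∀ x : {w : ↥{w | c w = j} | w ≠ ⟨v, hvA⟩},
              c' ⟨x.1.1, hne1 x⟩ = j := by
            rintro x
            rw [← hcd x.1.1 (hne1 x)]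
            exact x.1.2
          exact NG.acyclic_of_emb
            ⟨⟨fun x => ⟨⟨x.1.1, hne1 x⟩, hcl1 x⟩,
              fun a b hab => Subtype.ext (Subtype.ext (congrArg (fun z => z.1.1) hab))⟩,
              Iff.rfl⟩ (hc' j)
      · -- class not containing v
        have hne1 : ∀ x : ↥{w | c w = j}, x.1 ≠ v := by
          intro x e
          apply hij
          have hx := x.2
          simp only [Set.mem_setOf_eq] at hx
          rw [e, hcv] at hx
          exact hx.symm
        have hcl1 : ∀ x : ↥{w | c w = j}, c' ⟨x.1, hne1 x⟩ = j := by
          intro x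
          rw [← hcd x.1 (hne1 x)]
          exact x.2
        exact NG.acyclic_of_emb
          ⟨⟨fun x => ⟨⟨x.1, hne1 x⟩, hcl1 x⟩,
            fun a b hab => Subtype.ext (congrArg (fun z => z.1.1) hab)⟩,
            Iff.rfl⟩ (hc' j)

theorem stmt19 {β : Type*} [Fintype β] (H : SimpleGraph β) (n : ℕ)
    (hn : Fintype.card β = n) :
    2 * (vertexArboricity H + vertexArboricity Hᶜ) ≤ n + 3 := by
  rcases Nat.eq_zero_or_pos n with h0 | hpos
  · subst h0
    have hE : IsEmpty β := Fintype.card_eq_zero_iff.mp hn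
    have hz : ∀ (G : SimpleGraph β), vertexArboricity G = 0 := by
      intro G
      have : (0 : ℕ) ∈ {k | ∃ c : β → Fin k, ∀ i, (G.induce {v | c v = i}).IsAcyclic} :=
        ⟨fun w => (hE.false w).elim, fun i => i.elim0⟩
      exact Nat.le_zero.mp (Nat.sInf_le this)
    rw [hz H, hz Hᶜ]
    omega
  · obtain ⟨D, hD, h1, h2⟩ := NG.degen_compl H
    have a1 : vertexArboricity H ≤ D / 2 + 1 :=
      Nat.sInf_le (NG.degen_arb (Fintype.card β) H D le_rfl h1)
    have a2 : vertexArboricity Hᶜ ≤ (Fintype.card β - 1 - D) / 2 + 1 :=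
      Nat.sInf_le (NG.degen_arb (Fintype.card β) Hᶜ _ le_rfl h2)
    rw [hn] at hD a2
    omega
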